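/- arXiv:math/9803060 — 2 statements merged into one kernel-verified Lean document; each statement's English description precedes it below -/
import Mathlib

section
/- Let A ≠ 0 be an n×m complex matrix with norms μ_1, μ_2 on C^m and ν_1, ν_2 on C^n. If ‖A‖^{(2)} = M_μ · M_ν · ‖A‖^{(1)}, where M_μ = max μ_1(x)/μ_2(x) and M_ν = max ν_2(y)/ν_1(y), then every maximizer v of ν_2(Ax)/μ_2(x) satisfies: (i) v maximizes μ_1(x)/μ_2(x); (ii) Av maximizes ν_2(y)/ν_1(y); (iii) v maximizes ν_1(Ax)/μ_1(x). -/
open scoped BigOperators ENNReal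

/-- The Hölder `ℓ_p` norm of a vector in `ℂ^m`, for `p ∈ [1,∞]`. -/
noncomputable def lpNorm {m : ℕ} (p : ℝ≥0∞) (x : Fin m → ℂ) : ℝ :=
  if p = ⊤ then ⨆ i, ‖x i‖ else (∑ i, ‖x i‖ ^ p.toReal) ^ (1 / p.toReal)

/-- The operator norm of an `n × m` complex matrix induced by `ℓ_p` on `ℂ^m`
and `ℓ_q` on `ℂ^n`. -/
noncomputable def opNorm {n m : ℕ} (p q : ℝ≥0∞) (A : Matrix (Fin n) (Fin m) ℂ) : ℝ :=
  ⨆ x : {x : Fin m → ℂ // x ≠ 0}, lpNorm q (A.mulVec x.1) / lpNorm p x.1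

/-- The operator norm of an `n × m` complex matrix induced by general norms
`μ` on `ℂ^m` and `ν` on `ℂ^n`. -/
noncomputable def opNormGen {n m : ℕ} (μ : (Fin m → ℂ) → ℝ) (ν : (Fin n → ℂ) → ℝ)
    (A : Matrix (Fin n) (Fin m) ℂ) : ℝ :=
  ⨆ x : {x : Fin m → ℂ // x ≠ 0}, ν (A.mulVec x.1) / μ x.1

lemma seminorm_upper {k : ℕ} (p : Seminorm ℂ (Fin k → ℂ)) :
    ∃ C : ℝ, 0 ≤ C ∧ ∀ x, p x ≤ C * ‖x‖ := by
  refine ⟨∑ i, p (fun j => if i = j then 1 else 0), Finset.sum_nonneg fun i _ => apply_nonneg _ _,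
    fun x => ?_⟩
  calc p x = p (∑ i, (x i) • fun j => if i = j then (1:ℂ) else 0) := by rw [← pi_eq_sum_univ]
    _ ≤ ∑ i, p ((x i) • fun j => if i = j then (1:ℂ) else 0) :=
        Finset.le_sum_of_subadditive (fun z => p z) (map_zero p).le (map_add_le_add p) _ _
    _ ≤ ∑ i, ‖x‖ * p (fun j => if i = j then (1:ℂ) else 0) := by
        refine Finset.sum_le_sum fun i _ => ?_
        rw [map_smul_eq_mul]
        exact mul_le_mul_of_nonneg_right (norm_le_pi_norm x i) (apply_nonneg _ _)
    _ = (∑ i, p (fun j => if i = j then (1:ℂ) else 0)) * ‖x‖ := by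
        rw [mul_comm, Finset.mul_sum]

lemma seminorm_cont {k : ℕ} (p : Seminorm ℂ (Fin k → ℂ)) : Continuous fun x => p x := by
  obtain ⟨C, hC0, hC⟩ := seminorm_upper p
  refine (LipschitzWith.of_dist_le_mul (K := ⟨C, hC0⟩) fun x y => ?_).continuous
  rw [Real.dist_eq, dist_eq_norm]
  calc |p x - p y| ≤ p (x - y) := abs_sub_map_le_sub p x y
    _ ≤ C * ‖x - y‖ := hC _

lemma seminorm_lower {k : ℕ} (p : Seminorm ℂ (Fin k → ℂ)) (hp : ∀ x, p x = 0 → x = 0) :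
    ∃ c : ℝ, 0 < c ∧ ∀ x, c * ‖x‖ ≤ p x := by
  rcases Nat.eq_zero_or_pos k with hk | hk
  · refine ⟨1, one_pos, fun x => ?_⟩
    have : x = 0 := by subst hk; ext i; exact absurd i.2 (by omega)
    simp [this]
  · have hne : (Metric.sphere (0 : Fin k → ℂ) 1).Nonempty := by
      haveI : Nontrivial (Fin k → ℂ) := by
        refine ⟨fun j => if ⟨0, hk⟩ = j then 1 else 0, 0, ?_⟩
        intro h
        have := congrFun h ⟨0, hk⟩
        simp at this
      rw [NormedSpace.sphere_nonempty]
      exact zero_le_one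
    obtain ⟨x₀, hx₀m, hx₀⟩ := (isCompact_sphere (0 : Fin k → ℂ) 1).exists_isMinOn hne
      ((seminorm_cont p).continuousOn)
    have hx₀n : ‖x₀‖ = 1 := by simpa using hx₀m
    have hx₀0 : x₀ ≠ 0 := by intro h; rw [h] at hx₀n; simp at hx₀n
    have hc : 0 < p x₀ := lt_of_le_of_ne (apply_nonneg _ _) fun h => hx₀0 (hp _ h.symm)
    refine ⟨p x₀, hc, fun x => ?_⟩
    rcases eq_or_ne x 0 with rfl | hx
    · simp
    · have hxn : (0:ℝ) < ‖x‖ := norm_pos_iff.2 hx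
      have hmem : (‖x‖⁻¹ : ℂ) • x ∈ Metric.sphere (0 : Fin k → ℂ) 1 := by
        simp [norm_smul, hxn.ne', inv_mul_cancel₀ hxn.ne']
      have hle : p x₀ ≤ p ((‖x‖⁻¹ : ℂ) • x) := hx₀ hmem
      have heval : p ((‖x‖⁻¹ : ℂ) • x) = ‖x‖⁻¹ * p x := by
        rw [map_smul_eq_mul]; simp [abs_of_pos (inv_pos.2 hxn)]
      rw [heval] at hle
      calc p x₀ * ‖x‖ ≤ (‖x‖⁻¹ * p x) * ‖x‖ := by nlinarith
        _ = p x := by field_simp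

lemma triple_eq {a b c A B C : ℝ} (ha : 0 < a) (hb : 0 < b) (hc : 0 < c)
    (h1 : a ≤ A) (h2 : b ≤ B) (h3 : c ≤ C) (h : a * b * c = A * B * C) :
    a = A ∧ b = B ∧ c = C := by
  have hA : 0 < A := ha.trans_le h1
  have hB : 0 < B := hb.trans_le h2
  have hC : 0 < C := hc.trans_le h3
  refine ⟨le_antisymm h1 ?_, le_antisymm h2 ?_, le_antisymm h3 ?_⟩ <;>
      (by_contra h'; push_neg at h')
  · nlinarith [mul_lt_mul_of_pos_right (mul_lt_mul_of_pos_right h' hb) hc,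
      mul_le_mul_of_nonneg_right (mul_le_mul_of_nonneg_left h2 hA.le) hc.le,
      mul_le_mul_of_nonneg_left h3 (mul_pos hA hB).le]
  · nlinarith [mul_lt_mul_of_pos_right (mul_lt_mul_of_pos_left h' ha) hc,
      mul_le_mul_of_nonneg_right (mul_le_mul_of_nonneg_right h1 hB.le) hc.le,
      mul_le_mul_of_nonneg_left h3 (mul_pos hA hB).le]
  · nlinarith [mul_lt_mul_of_pos_left h' (mul_pos ha hb),
      mul_le_mul_of_nonneg_right (mul_le_mul_of_nonneg_right h1 hb.le) hC.le,
      mul_le_mul_of_nonneg_left (mul_le_mul_of_nonneg_left h2 hA.le) hC.le]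

/-- Theorem 1 (necessity): if equality holds in (1.1), then every maximizer `v`
of `ν₂(Ax)/μ₂(x)` maximizes `μ₁/μ₂`, `Av` maximizes `ν₂/ν₁`, and `v`
maximizes `ν₁(Ax)/μ₁(x)`. -/
theorem stmt_4 {n m : ℕ} (A : Matrix (Fin n) (Fin m) ℂ) (hA : A ≠ 0)
    (μ₁ μ₂ : Seminorm ℂ (Fin m → ℂ)) (ν₁ ν₂ : Seminorm ℂ (Fin n → ℂ))
    (hμ₁ : ∀ x, μ₁ x = 0 → x = 0) (hμ₂ : ∀ x, μ₂ x = 0 → x = 0)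
    (hν₁ : ∀ y, ν₁ y = 0 → y = 0) (hν₂ : ∀ y, ν₂ y = 0 → y = 0)
    (heq : opNormGen (fun x => μ₂ x) (fun y => ν₂ y) A =
      (⨆ x : {x : Fin m → ℂ // x ≠ 0}, μ₁ x.1 / μ₂ x.1) *
        (⨆ y : {y : Fin n → ℂ // y ≠ 0}, ν₂ y.1 / ν₁ y.1) *
          opNormGen (fun x => μ₁ x) (fun y => ν₁ y) A) :
    ∀ v : Fin m → ℂ, v ≠ 0 →
      ν₂ (A.mulVec v) / μ₂ v = opNormGen (fun x => μ₂ x) (fun y => ν₂ y) A →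
        (μ₁ v / μ₂ v = ⨆ x : {x : Fin m → ℂ // x ≠ 0}, μ₁ x.1 / μ₂ x.1) ∧
        (ν₂ (A.mulVec v) / ν₁ (A.mulVec v) =
          ⨆ y : {y : Fin n → ℂ // y ≠ 0}, ν₂ y.1 / ν₁ y.1) ∧
        (ν₁ (A.mulVec v) / μ₁ v = opNormGen (fun x => μ₁ x) (fun y => ν₁ y) A) := by
  intro v hv0 hv
  -- bounds
  obtain ⟨C1, hC10, hC1⟩ := seminorm_upper μ₁
  obtain ⟨c1, hc1, hc1'⟩ := seminorm_lower μ₁ hμ₁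
  obtain ⟨c2, hc2, hc2'⟩ := seminorm_lower μ₂ hμ₂
  obtain ⟨D2, hD20, hD2⟩ := seminorm_upper (ν₂.comp A.mulVecLin)
  obtain ⟨D1, hD10, hD1⟩ := seminorm_upper (ν₁.comp A.mulVecLin)
  obtain ⟨E2, hE20, hE2⟩ := seminorm_upper ν₂
  obtain ⟨e1, he1, he1'⟩ := seminorm_lower ν₁ hν₁
  have hcomp1 : ∀ x, (ν₁.comp A.mulVecLin) x = ν₁ (A.mulVec x) := fun x => rfl
  have hcomp2 : ∀ x, (ν₂.comp A.mulVecLin) x = ν₂ (A.mulVec x) := fun x => rfl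
  have normpos : ∀ (k : ℕ) (x : Fin k → ℂ), x ≠ 0 → (0:ℝ) < ‖x‖ := fun k x hx =>
    norm_pos_iff.2 hx
  -- BddAbove facts
  have hbd1 : BddAbove (Set.range fun x : {x : Fin m → ℂ // x ≠ 0} => μ₁ x.1 / μ₂ x.1) := by
    refine ⟨C1 / c2, ?_⟩
    rintro _ ⟨x, rfl⟩
    have hxn := normpos m x.1 x.2
    have hμ₂pos : 0 < μ₂ x.1 := lt_of_lt_of_le (by positivity) (hc2' x.1)
    rw [div_le_div_iff₀ hμ₂pos hc2]
    nlinarith [mul_le_mul_of_nonneg_right (hC1 x.1) hc2.le,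
      mul_le_mul_of_nonneg_left (hc2' x.1) hC10]
  have hbd2 : BddAbove (Set.range fun y : {y : Fin n → ℂ // y ≠ 0} => ν₂ y.1 / ν₁ y.1) := by
    refine ⟨E2 / e1, ?_⟩
    rintro _ ⟨y, rfl⟩
    have hyn := normpos n y.1 y.2
    have hpos : 0 < ν₁ y.1 := lt_of_lt_of_le (by positivity) (he1' y.1)
    rw [div_le_div_iff₀ hpos he1]
    nlinarith [mul_le_mul_of_nonneg_right (hE2 y.1) he1.le,
      mul_le_mul_of_nonneg_left (he1' y.1) hE20]
  have hbd3 : BddAbove (Set.range fun x : {x : Fin m → ℂ // x ≠ 0} =>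
      ν₁ (A.mulVec x.1) / μ₁ x.1) := by
    refine ⟨D1 / c1, ?_⟩
    rintro _ ⟨x, rfl⟩
    have hxn := normpos m x.1 x.2
    have hpos : 0 < μ₁ x.1 := lt_of_lt_of_le (by positivity) (hc1' x.1)
    rw [div_le_div_iff₀ hpos hc1]
    have := hD1 x.1
    rw [hcomp1] at this
    nlinarith [mul_le_mul_of_nonneg_right this hc1.le,
      mul_le_mul_of_nonneg_left (hc1' x.1) hD10]
  have hbd4 : BddAbove (Set.range fun x : {x : Fin m → ℂ // x ≠ 0} =>
      ν₂ (A.mulVec x.1) / μ₂ x.1) := by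
    refine ⟨D2 / c2, ?_⟩
    rintro _ ⟨x, rfl⟩
    have hxn := normpos m x.1 x.2
    have hpos : 0 < μ₂ x.1 := lt_of_lt_of_le (by positivity) (hc2' x.1)
    rw [div_le_div_iff₀ hpos hc2]
    have := hD2 x.1
    rw [hcomp2] at this
    nlinarith [mul_le_mul_of_nonneg_right this hc2.le,
      mul_le_mul_of_nonneg_left (hc2' x.1) hD20]
  -- a nonzero column of A
  have hAij : ∃ i j, A i j ≠ 0 := by
    by_contra h
    push_neg at h
    exact hA (by ext i j; exact h i j)
  obtain ⟨i, j, hij⟩ := hAij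
  set x₀ : Fin m → ℂ := Pi.single j 1 with hx₀def
  have hx₀0 : x₀ ≠ 0 := by
    intro h
    have := congrFun h j
    simp [hx₀def] at this
  have hAx₀ : A.mulVec x₀ ≠ 0 := by
    intro h
    have := congrFun h i
    simp [hx₀def, Matrix.mulVec_single] at this
    exact hij this
  have hsup2pos : 0 < opNormGen (fun x => μ₂ x) (fun y => ν₂ y) A := by
    have hnum : 0 < ν₂ (A.mulVec x₀) :=
      lt_of_le_of_ne (apply_nonneg _ _) fun h => hAx₀ (hν₂ _ h.symm)
    have hden : 0 < μ₂ x₀ :=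
      lt_of_le_of_ne (apply_nonneg _ _) fun h => hx₀0 (hμ₂ _ h.symm)
    calc (0:ℝ) < ν₂ (A.mulVec x₀) / μ₂ x₀ := div_pos hnum hden
      _ ≤ _ := le_ciSup hbd4 (⟨x₀, hx₀0⟩ : {x : Fin m → ℂ // x ≠ 0})
  have hAv : A.mulVec v ≠ 0 := by
    intro h
    rw [h, map_zero, zero_div] at hv
    exact hsup2pos.ne hv
  -- positivity of all quantities
  have hμ₁v : 0 < μ₁ v := lt_of_le_of_ne (apply_nonneg _ _) fun h => hv0 (hμ₁ _ h.symm)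
  have hμ₂v : 0 < μ₂ v := lt_of_le_of_ne (apply_nonneg _ _) fun h => hv0 (hμ₂ _ h.symm)
  have hν₁v : 0 < ν₁ (A.mulVec v) :=
    lt_of_le_of_ne (apply_nonneg _ _) fun h => hAv (hν₁ _ h.symm)
  have hν₂v : 0 < ν₂ (A.mulVec v) :=
    lt_of_le_of_ne (apply_nonneg _ _) fun h => hAv (hν₂ _ h.symm)
  have ha : μ₁ v / μ₂ v ≤ ⨆ x : {x : Fin m → ℂ // x ≠ 0}, μ₁ x.1 / μ₂ x.1 :=
    le_ciSup hbd1 (⟨v, hv0⟩ : {x : Fin m → ℂ // x ≠ 0})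
  have hb : ν₂ (A.mulVec v) / ν₁ (A.mulVec v) ≤
      ⨆ y : {y : Fin n → ℂ // y ≠ 0}, ν₂ y.1 / ν₁ y.1 :=
    le_ciSup hbd2 (⟨A.mulVec v, hAv⟩ : {y : Fin n → ℂ // y ≠ 0})
  have hc : ν₁ (A.mulVec v) / μ₁ v ≤ opNormGen (fun x => μ₁ x) (fun y => ν₁ y) A :=
    le_ciSup hbd3 (⟨v, hv0⟩ : {x : Fin m → ℂ // x ≠ 0})
  have hprod : (μ₁ v / μ₂ v) * (ν₂ (A.mulVec v) / ν₁ (A.mulVec v)) *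
      (ν₁ (A.mulVec v) / μ₁ v) =
      (⨆ x : {x : Fin m → ℂ // x ≠ 0}, μ₁ x.1 / μ₂ x.1) *
        (⨆ y : {y : Fin n → ℂ // y ≠ 0}, ν₂ y.1 / ν₁ y.1) *
          opNormGen (fun x => μ₁ x) (fun y => ν₁ y) A := by
    rw [← heq, ← hv]
    field_simp
  exact triple_eq (div_pos hμ₁v hμ₂v) (div_pos hν₂v hν₁v) (div_pos hν₁v hμ₁v) ha hb hc hprod
end

section
/- Let A be an n×m complex matrix, 1 < p < ∞, and let v be a maximizer of ‖Ax‖_q/‖x‖_p such that all nonzero components of v have the same absolute value and all nonzero components of Av have the same absolute value. Then v is an eigenvector of A*A. -/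
open scoped BigOperators ENNReal

open Filter Topology

section Stmt10Aux


lemma s10_normSq_expand (z u : ℂ) (t : ℝ) :
    Complex.normSq (z + t • u) =
      Complex.normSq z + (2 * ((starRingEnd ℂ) z * u).re) * t + Complex.normSq u * t ^ 2 := by
  simp [Complex.normSq_apply, Complex.add_re, Complex.add_im, Complex.smul_re, Complex.smul_im,
    Complex.mul_re, Complex.conj_re, Complex.conj_im]
  ring

lemma s10_norm_rpow_eq (w : ℂ) (r : ℝ) : ‖w‖ ^ r = Complex.normSq w ^ (r / 2) := by
  rw [Complex.normSq_eq_norm_sq, ← Real.rpow_natCast ‖w‖ 2,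
    ← Real.rpow_mul (by positivity), show ((2:ℕ):ℝ) * (r/2) = r by push_cast; ring]

lemma s10_hasDerivAt_norm_rpow (z u : ℂ) (hz : z ≠ 0) (r : ℝ) :
    HasDerivAt (fun t : ℝ => ‖z + t • u‖ ^ r)
      (r * ‖z‖ ^ (r - 2) * ((starRingEnd ℂ) z * u).re) 0 := by
  have hfd : HasDerivAt (fun t : ℝ => Complex.normSq z + (2 * ((starRingEnd ℂ) z * u).re) * t
      + Complex.normSq u * t ^ 2) (2 * ((starRingEnd ℂ) z * u).re) 0 := by
    have h1 : HasDerivAt (fun t : ℝ => Complex.normSq z + (2 * ((starRingEnd ℂ) z * u).re) * t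
        + Complex.normSq u * t ^ 2)
        (0 + (2 * ((starRingEnd ℂ) z * u).re) * 1 + Complex.normSq u * (2 * 0 ^ 1)) 0 := by
      exact ((hasDerivAt_const _ _).add ((hasDerivAt_id 0).const_mul _)).add
        ((hasDerivAt_pow 2 0).const_mul _)
    simpa using h1
  have hne : Complex.normSq z ≠ 0 := by simpa [Complex.normSq_eq_zero] using hz
  have h2 := hfd.rpow_const (p := r / 2) (by left; simpa using hne)
  have h3 : (fun t : ℝ => (Complex.normSq z + (2 * ((starRingEnd ℂ) z * u).re) * t
      + Complex.normSq u * t ^ 2) ^ (r / 2)) = fun t : ℝ => ‖z + t • u‖ ^ r := by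
    funext t
    rw [s10_norm_rpow_eq, s10_normSq_expand]
  rw [h3] at h2
  convert h2 using 1
  have : Complex.normSq z ^ (r / 2 - 1) = ‖z‖ ^ (r - 2) := by
    rw [Complex.normSq_eq_norm_sq, ← Real.rpow_natCast ‖z‖ 2,
      ← Real.rpow_mul (by positivity)]
    push_cast
    rw [show (2:ℝ) * (r/2 - 1) = r - 2 by ring]
  rw [← this]
  ring_nf

lemma s10_hasDerivAt_abs_rpow_zero {r : ℝ} (hr : 1 < r) :
    HasDerivAt (fun t : ℝ => |t| ^ r) 0 0 := by
  rw [hasDerivAt_iff_tendsto_slope]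
  have hb : Tendsto (fun t : ℝ => |t| ^ (r - 1)) (𝓝[≠] (0:ℝ)) (𝓝 0) := by
    have hc : ContinuousAt (fun s : ℝ => s ^ (r - 1)) 0 :=
      Real.continuousAt_rpow_const 0 (r - 1) (Or.inr (by linarith))
    have habs : Tendsto (fun t : ℝ => |t|) (𝓝[≠] (0:ℝ)) (𝓝 0) := by
      have : Tendsto (fun t : ℝ => |t|) (𝓝 (0:ℝ)) (𝓝 |(0:ℝ)|) := continuous_abs.tendsto 0
      simpa using this.mono_left nhdsWithin_le_nhds
    have := hc.tendsto.comp habs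
    simpa [Function.comp_def, Real.zero_rpow (by linarith : r - 1 ≠ 0)] using this
  apply squeeze_zero_norm' _ hb
  filter_upwards [self_mem_nhdsWithin] with t ht
  have ht' : (t:ℝ) ≠ 0 := ht
  have habs : (0:ℝ) < |t| := abs_pos.mpr ht'
  have hs : slope (fun t : ℝ => |t| ^ r) 0 t = |t| ^ r / t := by
    simp [slope, Real.zero_rpow (by linarith : r ≠ 0)]
    ring
  rw [hs, Real.norm_eq_abs, abs_div, abs_of_nonneg (Real.rpow_nonneg (abs_nonneg t) r)]
  rw [show |t| ^ r / |t| = |t| ^ r / |t| ^ (1:ℝ) by rw [Real.rpow_one],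
    ← Real.rpow_sub habs]

lemma s10_hasDerivAt_term (z u : ℂ) (r : ℝ) (hr : 1 < r ∨ z ≠ 0) :
    HasDerivAt (fun t : ℝ => ‖z + t • u‖ ^ r)
      (r * ‖z‖ ^ (r - 2) * ((starRingEnd ℂ) z * u).re) 0 := by
  rcases hr with hr | hz
  · by_cases hz : z = 0
    · subst hz
      have h0 : (fun t : ℝ => ‖(0:ℂ) + t • u‖ ^ r) = fun t : ℝ => |t| ^ r * ‖u‖ ^ r := by
        funext t
        rw [zero_add, norm_smul, Real.norm_eq_abs, Real.mul_rpow (abs_nonneg t) (norm_nonneg u)]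
      rw [h0]
      have := (s10_hasDerivAt_abs_rpow_zero hr).mul_const (‖u‖ ^ r)
      simpa using this
    · exact s10_hasDerivAt_norm_rpow z u hz r
  · exact s10_hasDerivAt_norm_rpow z u hz r

lemma s10_hasDerivAt_lp {ι : Type*} (s : Finset ι) (z u : ι → ℂ) (r : ℝ) (hr0 : r ≠ 0)
    (hr : ∀ i ∈ s, 1 < r ∨ z i ≠ 0)
    (hsum : (∑ i ∈ s, ‖z i‖ ^ r) ≠ 0) :
    HasDerivAt (fun t : ℝ => (∑ i ∈ s, ‖z i + t • u i‖ ^ r) ^ (1/r))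
      ((∑ i ∈ s, ‖z i‖ ^ r) ^ (1/r - 1) *
        ∑ i ∈ s, ‖z i‖ ^ (r - 2) * ((starRingEnd ℂ) (z i) * u i).re) 0 := by
  have hterm : ∀ i ∈ s, HasDerivAt (fun t : ℝ => ‖z i + t • u i‖ ^ r)
      (r * ‖z i‖ ^ (r - 2) * ((starRingEnd ℂ) (z i) * u i).re) 0 :=
    fun i hi => s10_hasDerivAt_term (z i) (u i) r (hr i hi)
  have hS := HasDerivAt.fun_sum hterm
  have h0 : (∑ i ∈ s, ‖z i + (0:ℝ) • u i‖ ^ r) = ∑ i ∈ s, ‖z i‖ ^ r := by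
    simp
  have h2 := hS.rpow_const (p := 1/r)
    (by show (∑ i ∈ s, ‖z i + (0:ℝ) • u i‖ ^ r) ≠ 0 ∨ 1 ≤ 1/r; rw [h0]; exact Or.inl hsum)
  convert h2 using 1
  rw [h0, Finset.mul_sum, Finset.sum_mul, Finset.sum_mul]
  apply Finset.sum_congr rfl
  intro i hi
  field_simp

lemma s10_eq_of_re {m : ℕ} (x y : Fin m → ℂ)
    (h : ∀ w : Fin m → ℂ, (∑ k, (starRingEnd ℂ) (x k) * w k).re
      = (∑ k, (starRingEnd ℂ) (y k) * w k).re) :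
    x = y := by
  funext k
  have h1 := h (Pi.single k 1)
  have h2 := h (Pi.single k Complex.I)
  simp only [Pi.single_apply, mul_ite, mul_one, mul_zero, Finset.sum_ite_eq',
    Finset.mem_univ, if_true] at h1 h2
  apply Complex.ext
  · simpa using h1
  · simpa [Complex.mul_re] using h2

lemma s10_flat_sum {ι : Type*} [Fintype ι] (z u : ι → ℂ) (β : ℝ)
    (hβ : ∀ i, z i ≠ 0 → ‖z i‖ = β) (e : ℝ) :
    ∑ i, ‖z i‖ ^ e * ((starRingEnd ℂ) (z i) * u i).re
      = β ^ e * (∑ i, (starRingEnd ℂ) (z i) * u i).re := by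
  rw [Complex.re_sum, Finset.mul_sum]
  apply Finset.sum_congr rfl
  intro i _
  by_cases hz : z i = 0
  · simp [hz]
  · rw [hβ i hz]

lemma s10_coord_le {m : ℕ} (p : ℝ≥0∞) (hp : p ≠ ⊤) (hr : 0 < p.toReal)
    (x : Fin m → ℂ) (k : Fin m) : ‖x k‖ ≤ lpNorm p x := by
  rw [lpNorm, if_neg hp]
  have h1 : ‖x k‖ = (‖x k‖ ^ p.toReal) ^ (1 / p.toReal) := by
    rw [← Real.rpow_mul (norm_nonneg _), mul_one_div_cancel hr.ne', Real.rpow_one]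
  rw [h1]
  apply Real.rpow_le_rpow (Real.rpow_nonneg (norm_nonneg _) _)
  · exact Finset.single_le_sum (fun i _ => Real.rpow_nonneg (norm_nonneg _) _) (Finset.mem_univ k)
  · positivity

lemma s10_lpNorm_nonneg {m : ℕ} (p : ℝ≥0∞) (x : Fin m → ℂ) : 0 ≤ lpNorm p x := by
  rw [lpNorm]
  split
  · rcases isEmpty_or_nonempty (Fin m) with hm | hm
    · simp [Real.iSup_of_isEmpty]
    · exact le_ciSup_of_le (Set.Finite.bddAbove (Set.finite_range _)) hm.some (norm_nonneg _)
  · positivity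

lemma s10_lpNorm_pos {m : ℕ} (p : ℝ≥0∞) (hp : p ≠ ⊤) (hr : 0 < p.toReal)
    (x : Fin m → ℂ) (hx : x ≠ 0) : 0 < lpNorm p x := by
  obtain ⟨k, hk⟩ : ∃ k, x k ≠ 0 := by
    by_contra h
    push_neg at h
    exact hx (funext fun k => h k)
  exact lt_of_lt_of_le (norm_pos_iff.mpr hk) (s10_coord_le p hp hr x k)

lemma s10_mulVec_coord_le {n m : ℕ} (A : Matrix (Fin n) (Fin m) ℂ) (p : ℝ≥0∞)
    (hp : p ≠ ⊤) (hr : 0 < p.toReal) (x : Fin m → ℂ) (j : Fin n) :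
    ‖A.mulVec x j‖ ≤ (∑ j', ∑ k, ‖A j' k‖) * lpNorm p x := by
  have h1 : ‖A.mulVec x j‖ ≤ ∑ k, ‖A j k‖ * lpNorm p x := by
    calc ‖A.mulVec x j‖ = ‖∑ k, A j k * x k‖ := by
          simp [Matrix.mulVec, dotProduct]
      _ ≤ ∑ k, ‖A j k * x k‖ := norm_sum_le _ _
      _ ≤ ∑ k, ‖A j k‖ * lpNorm p x := by
          apply Finset.sum_le_sum
          intro k _
          rw [norm_mul]
          exact mul_le_mul_of_nonneg_left (s10_coord_le p hp hr x k) (norm_nonneg _)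
  calc ‖A.mulVec x j‖ ≤ (∑ k, ‖A j k‖) * lpNorm p x := by rwa [Finset.sum_mul]
    _ ≤ (∑ j', ∑ k, ‖A j' k‖) * lpNorm p x := by
        apply mul_le_mul_of_nonneg_right _ (s10_lpNorm_nonneg p x)
        exact Finset.single_le_sum (fun j' _ => Finset.sum_nonneg fun k _ => norm_nonneg _)
          (Finset.mem_univ j)

lemma s10_lpNorm_le_of_coord {n : ℕ} (q : ℝ≥0∞) (hq : 1 ≤ q) (y : Fin n → ℂ) (B : ℝ)
    (hB : 0 ≤ B) (h : ∀ j, ‖y j‖ ≤ B) : lpNorm q y ≤ (n + 1) * B := by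
  have hn1 : (1:ℝ) ≤ (n:ℝ) + 1 := by
    have := Nat.cast_nonneg (α:=ℝ) n; linarith
  rw [lpNorm]
  split
  · -- q = ⊤
    rcases isEmpty_or_nonempty (Fin n) with hm | hm
    · rw [Real.iSup_of_isEmpty]
      positivity
    · exact le_trans (ciSup_le fun j => h j) (le_mul_of_one_le_left hB hn1)
  · rename_i hqt
    have hq1 : 1 ≤ q.toReal := by
      rw [← ENNReal.toReal_one]
      exact ENNReal.toReal_mono hqt hq
    have hq0 : 0 < q.toReal := by linarith
    calc (∑ j, ‖y j‖ ^ q.toReal) ^ (1 / q.toReal)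
        ≤ (∑ _j : Fin n, B ^ q.toReal) ^ (1 / q.toReal) := by
          apply Real.rpow_le_rpow (Finset.sum_nonneg fun j _ => Real.rpow_nonneg (norm_nonneg _) _)
            (Finset.sum_le_sum fun j _ => Real.rpow_le_rpow (norm_nonneg _) (h j) hq0.le)
            (by positivity)
      _ = ((n : ℝ) * B ^ q.toReal) ^ (1 / q.toReal) := by
          rw [Finset.sum_const, Finset.card_univ, Fintype.card_fin, nsmul_eq_mul]
      _ = (n : ℝ) ^ (1 / q.toReal) * B := by
          rw [Real.mul_rpow (by positivity) (by positivity),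
            ← Real.rpow_mul hB, mul_one_div_cancel hq0.ne', Real.rpow_one]
      _ ≤ (n + 1) * B := by
          apply mul_le_mul_of_nonneg_right _ hB
          rcases Nat.eq_zero_or_pos n with hn | hn
          · subst hn
            rw [Nat.cast_zero, Real.zero_rpow (one_div_ne_zero hq0.ne')]
            norm_num
          · calc (n:ℝ) ^ (1/q.toReal) ≤ (n:ℝ) ^ (1:ℝ) := by
                  apply Real.rpow_le_rpow_of_exponent_le (by exact_mod_cast hn)
                  rw [div_le_one hq0]; linarith
              _ = n := Real.rpow_one _
              _ ≤ n + 1 := by linarith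
  
lemma s10_ratio_le_opNorm {n m : ℕ} (A : Matrix (Fin n) (Fin m) ℂ) (p q : ℝ≥0∞)
    (hp : p ≠ ⊤) (hr : 0 < p.toReal) (hq : 1 ≤ q) (x : Fin m → ℂ) (hx : x ≠ 0) :
    lpNorm q (A.mulVec x) / lpNorm p x ≤ opNorm p q A := by
  set K : ℝ := (n + 1) * ∑ j', ∑ k, ‖A j' k‖ with hK
  have hbdd : ∀ z : {x : Fin m → ℂ // x ≠ 0}, lpNorm q (A.mulVec z.1) / lpNorm p z.1 ≤ K := by
    intro z
    have hpos := s10_lpNorm_pos p hp hr z.1 z.2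
    rw [div_le_iff₀ hpos]
    have h1 : lpNorm q (A.mulVec z.1) ≤ (n+1) * ((∑ j', ∑ k, ‖A j' k‖) * lpNorm p z.1) := by
      apply s10_lpNorm_le_of_coord q hq _ _ _ (fun j => s10_mulVec_coord_le A p hp hr z.1 j)
      have : (0:ℝ) ≤ ∑ j', ∑ k, ‖A j' k‖ :=
        Finset.sum_nonneg fun j' _ => Finset.sum_nonneg fun k _ => norm_nonneg _
      positivity
    calc lpNorm q (A.mulVec z.1) ≤ (n+1) * ((∑ j', ∑ k, ‖A j' k‖) * lpNorm p z.1) := h1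
      _ = K * lpNorm p z.1 := by rw [hK]; ring
  exact le_ciSup_of_le ⟨K, Set.forall_mem_range.mpr hbdd⟩ ⟨x, hx⟩ le_rfl

end Stmt10Aux

set_option maxHeartbeats 2000000 in
/-- Lemma 3.1 (case `1 < p < ∞`): a maximizer `v` of `‖Ax‖_q/‖x‖_p` whose
nonzero components all have the same absolute value, and such that the same
holds for `Av`, is an eigenvector of `A*A`. -/
theorem stmt_10 {n m : ℕ} (A : Matrix (Fin n) (Fin m) ℂ) (p q : ℝ≥0∞)
    (hp1 : 1 < p) (hp2 : p ≠ ⊤) (hq : 1 ≤ q)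
    (v : Fin m → ℂ) (hv : v ≠ 0)
    (hmax : lpNorm q (A.mulVec v) / lpNorm p v = opNorm p q A)
    (h1 : ∀ i j : Fin m, v i ≠ 0 → v j ≠ 0 → ‖v i‖ = ‖v j‖)
    (h2 : ∀ i j : Fin n, A.mulVec v i ≠ 0 → A.mulVec v j ≠ 0 →
      ‖A.mulVec v i‖ = ‖A.mulVec v j‖) :
    ∃ t : ℂ, (A.conjTranspose * A).mulVec v = t • v := by
  classical
  have hr1 : 1 < p.toReal := by
    have := ENNReal.toReal_strict_mono hp2 hp1
    simpa using this
  have hr0 : (0:ℝ) < p.toReal := lt_trans one_pos hr1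
  set r : ℝ := p.toReal with hrdef
  have hD0 : 0 < lpNorm p v := s10_lpNorm_pos p hp2 hr0 v hv
  set c : ℝ := opNorm p q A with hcdef
  have hN0 : lpNorm q (A.mulVec v) = c * lpNorm p v := by
    rw [← hmax]
    field_simp
  by_cases hAv : A.mulVec v = 0
  · refine ⟨0, ?_⟩
    rw [← Matrix.mulVec_mulVec, hAv, Matrix.mulVec_zero, zero_smul]
  obtain ⟨i0, hi0⟩ : ∃ i, v i ≠ 0 := by
    by_contra h; push_neg at h; exact hv (funext h)
  obtain ⟨j0, hj0⟩ : ∃ j, A.mulVec v j ≠ 0 := by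
    by_contra h; push_neg at h; exact hAv (funext h)
  set α : ℝ := ‖v i0‖ with hαdef
  set β : ℝ := ‖A.mulVec v j0‖ with hβdef
  have hαpos : 0 < α := norm_pos_iff.mpr hi0
  have hβpos : 0 < β := norm_pos_iff.mpr hj0
  have hflatv : ∀ i, v i ≠ 0 → ‖v i‖ = α := fun i hi => h1 i i0 hi hi0
  have hflatAv : ∀ j, A.mulVec v j ≠ 0 → ‖A.mulVec v j‖ = β := fun j hj => h2 j j0 hj hj0
  set Sp : ℝ := ∑ i, ‖v i‖ ^ r with hSpdef
  have hSppos : 0 < Sp := by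
    apply lt_of_lt_of_le (Real.rpow_pos_of_pos (norm_pos_iff.mpr hi0) r)
    exact Finset.single_le_sum (fun i _ => Real.rpow_nonneg (norm_nonneg _) _)
      (Finset.mem_univ i0)
  have hlpv : lpNorm p v = Sp ^ (1/r) := by rw [lpNorm, if_neg hp2]
  -- derivative of the denominator along w
  have hDw : ∀ w : Fin m → ℂ, HasDerivAt (fun t : ℝ => (∑ i, ‖v i + t • w i‖ ^ r) ^ (1/r))
      (Sp ^ (1/r - 1) * (α ^ (r-2) * (∑ i, (starRingEnd ℂ) (v i) * w i).re)) 0 := by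
    intro w
    have := s10_hasDerivAt_lp Finset.univ v w r hr0.ne' (fun i _ => Or.inl hr1) hSppos.ne'
    rwa [s10_flat_sum v w α hflatv (r-2)] at this
  -- eventually the perturbed vector is nonzero
  have hxt : ∀ w : Fin m → ℂ, ∀ᶠ t : ℝ in 𝓝 0, v + t • w ≠ 0 := by
    intro w
    have hcont : Tendsto (fun t : ℝ => |t| * ‖w i0‖) (𝓝 0) (𝓝 0) := by
      have : Continuous fun t : ℝ => |t| * ‖w i0‖ := continuous_abs.mul continuous_const
      simpa using this.tendsto 0
    filter_upwards [hcont.eventually_lt_const hαpos] with t ht hcontra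
    have hc := congrFun hcontra i0
    simp only [Pi.add_apply, Pi.smul_apply, Pi.zero_apply] at hc
    have : v i0 = -(t • w i0) := eq_neg_of_add_eq_zero_left hc
    have hnorm : α = |t| * ‖w i0‖ := by
      rw [hαdef, this, norm_neg, norm_smul, Real.norm_eq_abs]
    linarith
  -- lpNorm of the perturbed vector
  have hDlp : ∀ w : Fin m → ℂ, ∀ t : ℝ,
      (∑ i, ‖v i + t • w i‖ ^ r) ^ (1/r) = lpNorm p (v + t • w) := by
    intro w t
    rw [lpNorm, if_neg hp2]
    simp only [Pi.add_apply, Pi.smul_apply]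
    rfl
  have hAxt : ∀ w : Fin m → ℂ, ∀ t : ℝ,
      A.mulVec (v + t • w) = A.mulVec v + t • A.mulVec w := by
    intro w t
    rw [Matrix.mulVec_add, Matrix.mulVec_smul]
  -- the key scalar identity
  have hkey : ∃ s : ℝ, ∀ w : Fin m → ℂ,
      (∑ j, (starRingEnd ℂ) (A.mulVec v j) * A.mulVec w j).re
        = s * (∑ i, (starRingEnd ℂ) (v i) * w i).re := by
    by_cases hqt : q = ⊤
    · subst hqt
      have hne : Nonempty (Fin n) := ⟨j0⟩
      have hlpAv : lpNorm ⊤ (A.mulVec v) = β := by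
        rw [lpNorm, if_pos rfl]
        apply le_antisymm
        · refine ciSup_le fun j => ?_
          by_cases hj : A.mulVec v j = 0
          · rw [hj]
            simpa using hβpos.le
          · rw [hflatAv j hj]
        · exact le_ciSup (f := fun j => ‖A.mulVec v j‖)
            (Set.Finite.bddAbove (Set.finite_range _)) j0
      have hβc : β = c * lpNorm p v := by rw [← hlpAv]; exact hN0
      have hper : ∀ w : Fin m → ℂ, ∀ j, A.mulVec v j ≠ 0 →
          ((starRingEnd ℂ) (A.mulVec v j) * A.mulVec w j).re
            = β * (c * (Sp ^ (1/r - 1) * (α ^ (r-2)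
                * (∑ i, (starRingEnd ℂ) (v i) * w i).re))) := by
        intro w j hj
        have hd1 : HasDerivAt (fun t : ℝ => ‖A.mulVec v j + t • A.mulVec w j‖)
            (‖A.mulVec v j‖ ^ (-1:ℝ)
              * ((starRingEnd ℂ) (A.mulVec v j) * A.mulVec w j).re) 0 := by
          have hder := s10_hasDerivAt_norm_rpow (A.mulVec v j) (A.mulVec w j) hj 1
          have heqf : (fun t : ℝ => ‖A.mulVec v j + t • A.mulVec w j‖ ^ (1:ℝ))
              = fun t : ℝ => ‖A.mulVec v j + t • A.mulVec w j‖ :=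
            funext fun t => Real.rpow_one _
          rw [heqf] at hder
          convert hder using 1
          norm_num
        have hzero : ‖A.mulVec v j + (0:ℝ) • A.mulVec w j‖
            - c * (∑ i, ‖v i + (0:ℝ) • w i‖ ^ r) ^ (1/r) = 0 := by
          rw [hDlp w 0]
          simp only [zero_smul, add_zero]
          rw [hflatAv j hj, hβc]
          ring
        have hloc : IsLocalMax (fun t : ℝ => ‖A.mulVec v j + t • A.mulVec w j‖
            - c * (∑ i, ‖v i + t • w i‖ ^ r) ^ (1/r)) 0 := by
          filter_upwards [hxt w] with t hvt
          show ‖A.mulVec v j + t • A.mulVec w j‖ - c * (∑ i, ‖v i + t • w i‖ ^ r) ^ (1/r)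
              ≤ ‖A.mulVec v j + (0:ℝ) • A.mulVec w j‖
                - c * (∑ i, ‖v i + (0:ℝ) • w i‖ ^ r) ^ (1/r)
          rw [hzero]
          have hdpos : 0 < lpNorm p (v + t • w) := s10_lpNorm_pos p hp2 hr0 _ hvt
          have hratio := s10_ratio_le_opNorm A p ⊤ hp2 hr0 hq (v + t • w) hvt
          rw [div_le_iff₀ hdpos] at hratio
          have hcoord : ‖A.mulVec v j + t • A.mulVec w j‖
              ≤ lpNorm ⊤ (A.mulVec (v + t • w)) := by
            rw [lpNorm, if_pos rfl, hAxt w t]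
            exact le_ciSup (f := fun i => ‖(A.mulVec v + t • A.mulVec w) i‖)
              (Set.Finite.bddAbove (Set.finite_range _)) j
          rw [hDlp w t]
          have := le_trans hcoord hratio
          linarith
        have heq := hloc.hasDerivAt_eq_zero (hd1.sub ((hDw w).const_mul c))
        rw [hflatAv j hj, Real.rpow_neg_one, sub_eq_zero] at heq
        have h3 := congrArg (fun x => β * x) heq
        simpa [mul_assoc, mul_inv_cancel_left₀ hβpos.ne'] using h3
      refine ⟨((Finset.univ.filter (fun j => A.mulVec v j ≠ 0)).card : ℝ)
          * (β * (c * (Sp ^ (1/r-1) * α ^ (r-2)))), ?_⟩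
      intro w
      rw [Complex.re_sum]
      rw [← Finset.sum_subset
        (Finset.subset_univ (Finset.univ.filter (fun j => A.mulVec v j ≠ 0)))
        (fun j _ hj => by
          have hz : A.mulVec v j = 0 := by simpa using hj
          simp [hz])]
      rw [Finset.sum_congr rfl (fun j hj => hper w j (by simpa using hj))]
      rw [Finset.sum_const, nsmul_eq_mul]
      ring
    · -- finite q
      have hq1 : 1 ≤ q.toReal := by
        rw [← ENNReal.toReal_one]
        exact ENNReal.toReal_mono hqt hq
      have hq0 : (0:ℝ) < q.toReal := lt_of_lt_of_le one_pos hq1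
      set T : Finset (Fin n) := Finset.univ.filter (fun j => A.mulVec v j ≠ 0) with hT
      have hj0T : j0 ∈ T := by simp [hT, hj0]
      set Sq : ℝ := ∑ j ∈ T, ‖A.mulVec v j‖ ^ q.toReal with hSqdef
      have hSqpos : 0 < Sq := by
        apply lt_of_lt_of_le (Real.rpow_pos_of_pos (norm_pos_iff.mpr hj0) q.toReal)
        exact Finset.single_le_sum (fun j _ => Real.rpow_nonneg (norm_nonneg _) _) hj0T
      have hC1 : (0:ℝ) < Sq ^ (1/q.toReal - 1) * β ^ (q.toReal - 2) :=
        mul_pos (Real.rpow_pos_of_pos hSqpos _) (Real.rpow_pos_of_pos hβpos _)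
      refine ⟨c * (Sp ^ (1/r - 1) * α ^ (r-2)) / (Sq ^ (1/q.toReal - 1) * β ^ (q.toReal - 2)),
        ?_⟩
      intro w
      -- derivative of the (restricted) numerator along w
      have hSd := s10_hasDerivAt_lp T (A.mulVec v) (A.mulVec w) q.toReal hq0.ne'
        (fun j hj => Or.inr (by simpa [hT] using hj)) hSqpos.ne'
      have hflatT : (∑ j ∈ T, ‖A.mulVec v j‖ ^ (q.toReal - 2)
            * ((starRingEnd ℂ) (A.mulVec v j) * A.mulVec w j).re)
          = β ^ (q.toReal - 2) * (∑ j, (starRingEnd ℂ) (A.mulVec v j) * A.mulVec w j).re := by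
        rw [← s10_flat_sum (A.mulVec v) (A.mulVec w) β hflatAv (q.toReal - 2)]
        apply Finset.sum_subset (Finset.subset_univ T)
        intro j _ hj
        have hj' : A.mulVec v j = 0 := by simpa [hT] using hj
        simp [hj']
      rw [hflatT] at hSd
      -- the numerator restricted to T agrees with lpNorm q at 0 and is below it elsewhere
      have hS0 : (∑ j ∈ T, ‖A.mulVec v j + (0:ℝ) • A.mulVec w j‖ ^ q.toReal) ^ (1/q.toReal)
          = c * lpNorm p v := by
        rw [← hN0, lpNorm, if_neg hqt]
        congr 1
        simp only [zero_smul, add_zero]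
        apply Finset.sum_subset (Finset.subset_univ T)
        intro j _ hj
        have hj' : A.mulVec v j = 0 := by simpa [hT] using hj
        rw [hj', norm_zero, Real.zero_rpow hq0.ne']
      have hloc : IsLocalMax (fun t : ℝ =>
          (∑ j ∈ T, ‖A.mulVec v j + t • A.mulVec w j‖ ^ q.toReal) ^ (1/q.toReal)
            - c * (∑ i, ‖v i + t • w i‖ ^ r) ^ (1/r)) 0 := by
        have hzero : (∑ j ∈ T, ‖A.mulVec v j + (0:ℝ) • A.mulVec w j‖ ^ q.toReal) ^ (1/q.toReal)
            - c * (∑ i, ‖v i + (0:ℝ) • w i‖ ^ r) ^ (1/r) = 0 := by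
          rw [hS0, hDlp w 0]
          simp only [zero_smul, add_zero]
          ring
        filter_upwards [hxt w] with t hvt
        show (∑ j ∈ T, ‖A.mulVec v j + t • A.mulVec w j‖ ^ q.toReal) ^ (1/q.toReal)
              - c * (∑ i, ‖v i + t • w i‖ ^ r) ^ (1/r)
            ≤ (∑ j ∈ T, ‖A.mulVec v j + (0:ℝ) • A.mulVec w j‖ ^ q.toReal) ^ (1/q.toReal)
              - c * (∑ i, ‖v i + (0:ℝ) • w i‖ ^ r) ^ (1/r)
        rw [hzero]
        have hdpos : 0 < lpNorm p (v + t • w) := s10_lpNorm_pos p hp2 hr0 _ hvt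
        have hratio := s10_ratio_le_opNorm A p q hp2 hr0 hq (v + t • w) hvt
        rw [div_le_iff₀ hdpos] at hratio
        have hSN : (∑ j ∈ T, ‖A.mulVec v j + t • A.mulVec w j‖ ^ q.toReal) ^ (1/q.toReal)
            ≤ lpNorm q (A.mulVec (v + t • w)) := by
          rw [lpNorm, if_neg hqt, hAxt w t]
          apply Real.rpow_le_rpow
            (Finset.sum_nonneg fun j _ => Real.rpow_nonneg (norm_nonneg _) _)
          · apply Finset.sum_le_sum_of_subset_of_nonneg (Finset.subset_univ T)
            intro j _ _
            exact Real.rpow_nonneg (norm_nonneg _) _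
          · positivity
        rw [hDlp w t]
        have := le_trans hSN hratio
        linarith
      have heq := hloc.hasDerivAt_eq_zero (hSd.sub ((hDw w).const_mul c))
      rw [← hSqdef] at heq
      rw [div_mul_eq_mul_div, eq_div_iff hC1.ne']
      linear_combination heq
  obtain ⟨s, hs⟩ := hkey
  refine ⟨(s:ℂ), ?_⟩
  apply s10_eq_of_re
  intro w
  have hid : (∑ k, (starRingEnd ℂ) ((A.conjTranspose * A).mulVec v k) * w k)
      = ∑ j, (starRingEnd ℂ) (A.mulVec v j) * A.mulVec w j := by
    rw [← Matrix.mulVec_mulVec]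
    simp only [Matrix.mulVec, dotProduct, Matrix.conjTranspose_apply, map_sum, map_mul,
      Complex.star_def, Complex.conj_conj, Finset.sum_mul, Finset.mul_sum]
    rw [Finset.sum_comm]
    apply Finset.sum_congr rfl
    intro j _
    apply Finset.sum_congr rfl
    intro k _
    apply Finset.sum_congr rfl
    intro x _
    ring
  rw [hid, hs w]
  have : (∑ k, (starRingEnd ℂ) (((s:ℂ) • v) k) * w k)
      = (s:ℂ) * ∑ k, (starRingEnd ℂ) (v k) * w k := by
    rw [Finset.mul_sum]
    apply Finset.sum_congr rfl
    intro k _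
    simp only [Pi.smul_apply, smul_eq_mul, map_mul, Complex.conj_ofReal]
    ring
  rw [this, Complex.re_ofReal_mul]
end
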